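/- Let R be a commutative ring, p a prime number, and m ≥ 1 an integer. In the formal power series ring R⟦X⟧, the element (1+X)^{p^{m−1}} − 1 lies in the m-th power of the ideal (p, X) generated by p and X. -/

import Mathlib

private theorem aux_step {A : Type*} [CommRing A] (I : Ideal A) (p : ℕ) (hp : p.Prime)
    (hpI : (p : A) ∈ I) (m : ℕ) (hm : 1 ≤ m) (z : A) (hz : z ∈ I ^ m) :
    (1 + z) ^ p - 1 ∈ I ^ (m + 1) := by
  have key : (1 + z) ^ p - 1 =
      ∑ i ∈ Finset.range p, z ^ (i + 1) * (p.choose (i + 1) : A) := by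
    rw [add_comm, add_pow]
    rw [Finset.sum_range_succ']
    simp [mul_comm]
  rw [key]
  apply Ideal.sum_mem
  intro i hi
  rw [Finset.mem_range] at hi
  rcases eq_or_lt_of_le (Nat.succ_le_of_lt hi) with h | h
  · -- i + 1 = p : term is z^p
    have hz' : z ^ (i + 1) ∈ I ^ (m * (i + 1)) := by
      rw [pow_mul]
      exact Ideal.pow_mem_pow hz _
    have hle : m + 1 ≤ m * (i + 1) := by
      have h2 : 2 ≤ i + 1 := by have := hp.two_le; omega
      nlinarith
    exact Ideal.mul_mem_right _ _ (Ideal.pow_le_pow_right hle hz')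
  · -- i + 1 < p : p divides the binomial coefficient
    obtain ⟨c, hc⟩ := hp.dvd_choose_self (Nat.succ_ne_zero i) h
    have : z ^ (i + 1) * (p.choose (i + 1) : A) = (z ^ (i + 1) * (c : A)) * (p : A) := by
      rw [hc]; push_cast; ring
    rw [this, pow_succ]
    refine Ideal.mul_mem_mul (Ideal.mul_mem_right _ _ ?_) hpI
    have hzz : z ^ (i + 1) = z ^ i * z := by ring
    rw [hzz]
    exact Ideal.mul_mem_left _ _ hz

/-- Lemma 2.21(a) (Iwasawa-algebra content): in `R⟦X⟧` the element
`(1+X)^{p^{m-1}} - 1` lies in the `m`-th power of the ideal `(p, X)`. -/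
theorem omega_mem_pow_maximalIdeal
    (R : Type*) [CommRing R] (p : ℕ) (hp : p.Prime) (m : ℕ) (hm : 1 ≤ m) :
    (1 + PowerSeries.X) ^ (p ^ (m - 1)) - 1 ∈
      (Ideal.span {(p : PowerSeries R), PowerSeries.X}) ^ m := by
  induction m, hm using Nat.le_induction with
  | base =>
    simpa using Ideal.subset_span (by simp : PowerSeries.X ∈ _)
  | succ n hn ih =>
    have hpI : (p : PowerSeries R) ∈ Ideal.span {(p : PowerSeries R), PowerSeries.X} :=
      Ideal.subset_span (by simp)
    have : (n + 1) - 1 = (n - 1) + 1 := by omega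
    rw [this, pow_succ p, pow_mul, pow_succ]
    have h := aux_step _ p hp hpI n hn _ ih
    convert h using 2
    rw [pow_succ]
    rw [add_sub_cancel]
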